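/- Let L be a modular lattice and let g : L → ℝ ∪ {∞} be submodular. Define g* on the interval poset of L by g*([p,q]) = (g(p) + g(q))/2. Then for any two intervals [p,q], [p',q'], it holds that g*([p,q] ∧ [p',q']) + g*([(p∨p')∧(q∧q'), (p∨p')∨(q∧q')]) ≤ g*([p,q]) + g*([p',q']), where [p,q] ∧ [p',q'] = [p∧p', q∨q']. -/

import Mathlib

private lemma half_distrib (x y : EReal) (hx : x ≠ ⊥) (hy : y ≠ ⊥) :
    ((1 / 2 : ℝ) : EReal) * (x + y) = ((1 / 2 : ℝ) : EReal) * x + ((1 / 2 : ℝ) : EReal) * y := by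
  have hc : (0:ℝ) < 1/2 := by norm_num
  induction x with
  | bot => exact absurd rfl hx
  | top =>
    rw [EReal.top_add_of_ne_bot hy, EReal.coe_mul_top_of_pos (by exact_mod_cast hc)]
    induction y with
    | bot => exact absurd rfl hy
    | top => rw [EReal.coe_mul_top_of_pos (by exact_mod_cast hc),
        EReal.top_add_of_ne_bot (by simp)]
    | coe r => rw [← EReal.coe_mul, EReal.top_add_of_ne_bot (EReal.coe_ne_bot _)]
  | coe a =>
    induction y with
    | bot => exact absurd rfl hy
    | top =>
      rw [EReal.add_top_of_ne_bot (EReal.coe_ne_bot _),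
        EReal.coe_mul_top_of_pos (by exact_mod_cast hc), ← EReal.coe_mul,
        EReal.add_top_of_ne_bot (EReal.coe_ne_bot _)]
    | coe b =>
      rw [← EReal.coe_add, ← EReal.coe_mul, ← EReal.coe_mul, ← EReal.coe_mul, ← EReal.coe_add,
        mul_add]

/-- Let `g` be a submodular function on a modular lattice `L` and define
`g*([p,q]) = (g(p)+g(q))/2` on intervals. Then
`g*([p,q] ∧ [p',q']) + g*([(p∨p')∧(q∧q'), (p∨p')∨(q∧q')]) ≤ g*([p,q]) + g*([p',q'])`,
where `[p,q] ∧ [p',q'] = [p∧p', q∨q']`. -/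
theorem stmt17 {L : Type*} [Lattice L] [IsModularLattice L]
    (g : L → EReal) (hb : ∀ x : L, g x ≠ ⊥)
    (hsub : ∀ x y : L, g (x ⊓ y) + g (x ⊔ y) ≤ g x + g y)
    (p q p' q' : L) (h : p ≤ q) (h' : p' ≤ q') :
    ((1 / 2 : ℝ) : EReal) * (g (p ⊓ p') + g (q ⊔ q')) +
      ((1 / 2 : ℝ) : EReal) * (g ((p ⊔ p') ⊓ (q ⊓ q')) + g ((p ⊔ p') ⊔ (q ⊓ q'))) ≤
    ((1 / 2 : ℝ) : EReal) * (g p + g q) + ((1 / 2 : ℝ) : EReal) * (g p' + g q') := by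
  have hadd : ∀ x y : L, g x + g y ≠ ⊥ := fun x y => by
    simp [EReal.add_eq_bot_iff, hb x, hb y]
  rw [← half_distrib _ _ (hadd _ _) (hadd _ _), ← half_distrib _ _ (hadd _ _) (hadd _ _)]
  have key : g (p ⊓ p') + g (q ⊔ q') + (g ((p ⊔ p') ⊓ (q ⊓ q')) + g ((p ⊔ p') ⊔ (q ⊓ q')))
      ≤ g p + g q + (g p' + g q') := by
    have h1 := hsub (p ⊔ p') (q ⊓ q')
    have h2 := hsub p p'
    have h3 := hsub q q'
    calc g (p ⊓ p') + g (q ⊔ q') + (g ((p ⊔ p') ⊓ (q ⊓ q')) + g ((p ⊔ p') ⊔ (q ⊓ q')))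
        ≤ g (p ⊓ p') + g (q ⊔ q') + (g (p ⊔ p') + g (q ⊓ q')) := add_le_add_right h1 _
      _ = g (p ⊓ p') + g (p ⊔ p') + (g (q ⊓ q') + g (q ⊔ q')) := by
          abel
      _ ≤ g p + g p' + (g q + g q') := add_le_add h2 h3
      _ = g p + g q + (g p' + g q') := by abel
  exact mul_le_mul_of_nonneg_left key (by exact_mod_cast (by norm_num : (0:ℝ) ≤ 1/2))
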